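/- Let d be a martingale, f : ℕ → ℕ strictly increasing, n₀ ∈ ℕ, and ξ ∈ {0,1}^ℕ with d(ξ↾f(n)) ≥ 2^{2n+1} for all n ≥ n₀. Define the 'savings account' martingale δ by: δ(x) = d(x) for |x| ≤ f(n₀); and for |x| ≥ f(n₀) with f(n) ≤ |x| < f(n+1) (n ≥ n₀), δ(xi) = δ(x↾f(n))/2 + (δ(x) − δ(x↾f(n))/2)·d(xi)/d(x) for i ∈ {0,1} (assuming d(x) > 0 along ξ where needed). Then δ is a martingale and for every m with f(n) ≤ m < f(n+1), n ≥ n₀: δ(ξ↾m) ≥ 2^{n}. -/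

import Mathlib

open MeasureTheory

/-- The basic cylinder `[x]` of infinite binary sequences extending the finite string `x`. -/
def Cyl (x : List Bool) : Set (ℕ → Bool) := {α | ∀ i : Fin x.length, α i = x.get i}

/-- The open set `[X]` generated by a set of finite strings. -/
def OpenGen (X : Set (List Bool)) : Set (ℕ → Bool) := ⋃ x ∈ X, Cyl x

/-- The length-`n` initial segment of an infinite binary sequence, as a finite string. -/
def seg (ξ : ℕ → Bool) (n : ℕ) : List Bool := (List.range n).map ξ

/-- `μ` is the uniform (fair-coin) measure on Cantor space: every cylinder `[x]`
has measure `2^{-|x|}`. -/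
def UniformOn (μ : Measure (ℕ → Bool)) : Prop :=
  ∀ x : List Bool, μ (Cyl x) = (2 : ENNReal)⁻¹ ^ x.length

lemma seg_len (ξ : ℕ → Bool) (n : ℕ) : (seg ξ n).length = n := by simp [seg]

lemma seg_succ (ξ : ℕ → Bool) (n : ℕ) : seg ξ (n+1) = seg ξ n ++ [ξ n] := by
  simp [seg, List.range_succ]

lemma seg_take (ξ : ℕ → Bool) {k m : ℕ} (h : k ≤ m) : (seg ξ m).take k = seg ξ k := by
  simp [seg, ← List.map_take, List.take_range, h]

lemma stage_exists (f : ℕ → ℕ) (hf : StrictMono f) (n₀ m : ℕ) (h : f n₀ ≤ m) :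
    ∃ n, n₀ ≤ n ∧ f n ≤ m ∧ m < f (n+1) := by
  set P := fun n => n₀ ≤ n ∧ f n ≤ m with hP
  have hb : n₀ ≤ m := le_trans hf.le_apply h
  have hspec : P (Nat.findGreatest P m) := Nat.findGreatest_spec hb ⟨le_rfl, h⟩
  refine ⟨Nat.findGreatest P m, hspec.1, hspec.2, ?_⟩
  by_contra hc
  push_neg at hc
  exact Nat.findGreatest_is_greatest (Nat.lt_succ_self _) (le_trans hf.le_apply hc)
    ⟨le_trans hspec.1 (Nat.le_succ _), hc⟩

lemma stage_unique (f : ℕ → ℕ) (hf : StrictMono f) {n n' m : ℕ} (h1 : f n ≤ m)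
    (h2 : m < f (n+1)) (h3 : f n' ≤ m) (h4 : m < f (n'+1)) : n = n' := by
  rcases lt_trichotomy n n' with h|h|h
  · exact absurd (le_trans (hf.monotone h) h3) (not_le.mpr h2)
  · exact h
  · exact absurd (le_trans (hf.monotone h) h1) (not_le.mpr h4)


/-- Savings-account construction. Given a martingale `d` which is positive (as needed
for the defining recursion of `δ`), a strictly increasing `f`, and `ξ` with
`d(ξ↾f(n)) ≥ 2^{2n+1}` for `n ≥ n₀`, the function `δ` defined by `δ(x) = d(x)` for
`|x| ≤ f(n₀)` and, for `f(n) ≤ |x| < f(n+1)` with `n ≥ n₀`,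
`δ(xi) = δ(x↾f(n))/2 + (δ(x) − δ(x↾f(n))/2)·d(xi)/d(x)`, is a martingale satisfying
`δ(ξ↾m) ≥ 2^n` whenever `f(n) ≤ m < f(n+1)` and `n ≥ n₀`. -/
theorem stmt16 (d δ : List Bool → ℝ)
    (hpos : ∀ x, 0 < d x)
    (hmart : ∀ x, d (x ++ [false]) + d (x ++ [true]) = 2 * d x)
    (f : ℕ → ℕ) (hf : StrictMono f) (n₀ : ℕ) (ξ : ℕ → Bool)
    (hξ : ∀ n, n₀ ≤ n → (2 : ℝ) ^ (2 * n + 1) ≤ d (seg ξ (f n)))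
    (hδ0 : ∀ x : List Bool, x.length ≤ f n₀ → δ x = d x)
    (hδs : ∀ (x : List Bool) (n : ℕ), n₀ ≤ n → f n ≤ x.length → x.length < f (n + 1) →
      ∀ i : Bool, δ (x ++ [i]) =
        δ (x.take (f n)) / 2 + (δ x - δ (x.take (f n)) / 2) * d (x ++ [i]) / d x) :
    ((∀ x, 0 ≤ δ x) ∧ ∀ x, δ (x ++ [false]) + δ (x ++ [true]) = 2 * δ x) ∧
      ∀ n m, n₀ ≤ n → f n ≤ m → m < f (n + 1) → (2 : ℝ) ^ n ≤ δ (seg ξ m) := by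
  -- Key invariant, by strong induction on length
  have key : ∀ k (x : List Bool), x.length = k →
      0 ≤ δ x ∧ ∀ n, n₀ ≤ n → f n ≤ x.length → x.length < f (n+1) →
        δ (x.take (f n)) / 2 ≤ δ x := by
    intro k
    induction k using Nat.strong_induction_on with
    | _ k IH =>
      intro x hx
      by_cases hxl : x.length ≤ f n₀
      · have hd : δ x = d x := hδ0 x hxl
        refine ⟨hd ▸ (hpos x).le, ?_⟩
        intro n hn h1 h2
        have htk : x.take (f n) = x :=
          List.take_of_length_le (le_trans hxl (hf.monotone hn))
        rw [htk, hd]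
        linarith [hpos x]
      · push_neg at hxl
        have hne : x ≠ [] := by
          intro h; rw [h] at hxl; simp at hxl
        obtain ⟨y, b, rfl⟩ : ∃ y b, x = y ++ [b] := by
          rcases List.eq_nil_or_concat x with h'|⟨L,c,rfl⟩
          · exact absurd h' hne
          · exact ⟨L, c, by simp⟩
        have hylen : y.length + 1 = k := by simpa using hx
        have hy0 : f n₀ ≤ y.length := by
          simp at hxl; omega
        obtain ⟨n, hn, h1, h2⟩ := stage_exists f hf n₀ y.length hy0
        have hrec := hδs y n hn h1 h2 b
        have IHy := IH y.length (by omega) y rfl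
        have IHt : 0 ≤ δ (y.take (f n)) := by
          refine (IH (y.take (f n)).length ?_ _ rfl).1
          simp; omega
        have hcl : δ (y.take (f n)) / 2 ≤ δ y := IHy.2 n hn h1 h2
        have hterm : 0 ≤ (δ y - δ (y.take (f n)) / 2) * d (y ++ [b]) / d y := by
          apply div_nonneg _ (hpos y).le
          exact mul_nonneg (by linarith) (hpos _).le
        have hx0 : 0 ≤ δ (y ++ [b]) := by rw [hrec]; linarith
        refine ⟨hx0, ?_⟩
        intro n' hn' h1' h2'
        simp only [List.length_append, List.length_singleton] at h1' h2'
        by_cases hc : f n' ≤ y.length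
        · have : y.length < f (n' + 1) := by omega
          have hnn : n = n' := stage_unique f hf h1 h2 hc this
          subst hnn
          rw [List.take_append_of_le_length h1, hrec]
          linarith
        · have hfx : y.length + 1 ≤ f n' := by omega
          rw [List.take_of_length_le (by simpa using hfx)]
          linarith
  have hnn : ∀ x, 0 ≤ δ x := fun x => (key x.length x rfl).1
  -- martingale property
  have hmg : ∀ x, δ (x ++ [false]) + δ (x ++ [true]) = 2 * δ x := by
    intro x
    by_cases hxl : x.length < f n₀
    · rw [hδ0 (x ++ [false]) (by simp; omega), hδ0 (x ++ [true]) (by simp; omega),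
        hδ0 x (by omega)]
      exact hmart x
    · push_neg at hxl
      obtain ⟨n, hn, h1, h2⟩ := stage_exists f hf n₀ x.length hxl
      rw [hδs x n hn h1 h2 false, hδs x n hn h1 h2 true]
      have hd := (hpos x).ne'
      field_simp
      linear_combination (2 * δ x - δ (List.take (f n) x)) * hmart x
  refine ⟨⟨hnn, hmg⟩, ?_⟩
  -- formula along ξ
  have formula : ∀ n, n₀ ≤ n → ∀ m, f n ≤ m → m ≤ f (n+1) →
      δ (seg ξ m) = δ (seg ξ (f n)) / 2 * (1 + d (seg ξ m) / d (seg ξ (f n))) := by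
    intro n hn m hm hm'
    induction m, hm using Nat.le_induction with
    | base =>
      have hd := (hpos (seg ξ (f n))).ne'
      rw [div_self hd]
      ring
    | succ m hm IH =>
      have hm2 : m < f (n+1) := by omega
      have hrec := hδs (seg ξ m) n hn (by rw [seg_len]; exact hm) (by rw [seg_len]; exact hm2) (ξ m)
      rw [seg_take ξ hm] at hrec
      rw [seg_succ, hrec, IH (by omega)]
      have hd1 := (hpos (seg ξ m)).ne'
      have hd2 := (hpos (seg ξ (f n))).ne'
      rw [← seg_succ]
      field_simp
      ring
  -- lower bound on δ at stage starts
  have hA : ∀ n, n₀ ≤ n → d (seg ξ (f n)) / 2 ^ n ≤ δ (seg ξ (f n)) := by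
    intro n hn
    induction n, hn using Nat.le_induction with
    | base =>
      rw [hδ0 _ (by rw [seg_len])]
      have h1 : (1:ℝ) ≤ 2 ^ n₀ := one_le_pow₀ (by norm_num)
      have h2 := hpos (seg ξ (f n₀))
      rw [div_le_iff₀ (by positivity)]
      nlinarith
    | succ n hn IH =>
      have hform := formula n hn (f (n+1)) (hf (Nat.lt_succ_self n)).le le_rfl
      rw [hform]
      have hd1 := hpos (seg ξ (f n))
      have hd2 := hpos (seg ξ (f (n+1)))
      have h2n : (0:ℝ) < 2 ^ n := by positivity
      set a := δ (seg ξ (f n)) with ha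
      set c := d (seg ξ (f n)) with hc
      set e := d (seg ξ (f (n+1))) with he
      have h3 : c ≤ a * 2 ^ n := (div_le_iff₀ h2n).mp IH
      have hanonneg : 0 ≤ a := hnn _
      have step1 : e / 2 ^ (n+1) ≤ a * e / (2 * c) := by
        rw [div_le_div_iff₀ (by positivity) (by positivity),
          show ((2:ℝ) ^ (n+1)) = 2 * 2 ^ n from by ring]
        nlinarith [mul_le_mul_of_nonneg_left h3 (by positivity : (0:ℝ) ≤ 2 * e)]
      have step2 : a * e / (2 * c) ≤ a / 2 * (1 + e / c) := by
        have hcne := hd1.ne'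
        have hid : a / 2 * (1 + e / c) = a / 2 + a * e / (2 * c) := by
          field_simp
        rw [hid]
        linarith
      linarith
  intro n m hn hm hm'
  have hform := formula n hn m hm (le_of_lt hm')
  have hd1 := hpos (seg ξ (f n))
  have hd2 := hpos (seg ξ m)
  have hAn := hA n hn
  have hxn := hξ n hn
  have h2n : (0:ℝ) < 2 ^ n := by positivity
  have hAn2 : (2:ℝ) ^ (n+1) ≤ δ (seg ξ (f n)) := by
    have h1 : (2:ℝ) ^ (2*n+1) / 2 ^ n ≤ d (seg ξ (f n)) / 2 ^ n := by gcongr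
    have h2 : (2:ℝ) ^ (2*n+1) / 2 ^ n = 2 ^ (n+1) := by
      rw [div_eq_iff h2n.ne', ← pow_add]
      congr 1
      omega
    rw [h2] at h1
    linarith
  rw [hform]
  have hrat : (0:ℝ) ≤ d (seg ξ m) / d (seg ξ (f n)) := by positivity
  have hδnn : 0 ≤ δ (seg ξ (f n)) / 2 := by linarith [hnn (seg ξ (f n))]
  have hprod : 0 ≤ δ (seg ξ (f n)) / 2 * (d (seg ξ m) / d (seg ξ (f n))) :=
    mul_nonneg hδnn hrat
  have expand : δ (seg ξ (f n)) / 2 * (1 + d (seg ξ m) / d (seg ξ (f n))) =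
      δ (seg ξ (f n)) / 2 + δ (seg ξ (f n)) / 2 * (d (seg ξ m) / d (seg ξ (f n))) := by
    ring
  have hexp : (2:ℝ) ^ (n+1) = 2 * 2 ^ n := by ring
  rw [hexp] at hAn2
  rw [expand]
  linarith
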